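/- Let Φ be the heat kernel on ℝⁿ×ℝ, let α ∈ (0,n+2), let 0 < λ < 1, let t > 0, let x ∈ ℝⁿ, and let μ be a finite positive Borel measure supported in a ball B ⊂ ℝⁿ. Define g(y,s) = ∫_B Φ(y−z, s) dμ(z). Then ∬_{ℝⁿ×(0,t)} Φ(x−y, t−s)^{α/n} g(y,s)^λ dy ds ≤ C (√t)^{n+2−α−λn}, where C depends on n, α, λ, μ, and B but not on x or t. -/

import Mathlib

set_option linter.unusedSectionVars false
set_option maxHeartbeats 1000000
open Real MeasureTheory Set Metric ENNReal


lemma integral_le_toReal_lintegral {X : Type*} [MeasurableSpace X] (ρ : Measure X)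
    (f : X → ℝ) (hf : ∀ x, 0 ≤ f x) :
    ∫ x, f x ∂ρ ≤ (∫⁻ x, ENNReal.ofReal (f x) ∂ρ).toReal := by
  by_cases hint : Integrable f ρ
  · rw [integral_eq_lintegral_of_nonneg_ae (Filter.Eventually.of_forall hf)
      hint.aestronglyMeasurable]
  · rw [integral_undef hint]; exact ENNReal.toReal_nonneg

variable {V : Type*} [NormedAddCommGroup V] [InnerProductSpace ℝ V]
  [FiniteDimensional ℝ V] [MeasurableSpace V] [BorelSpace V]

lemma integrable_gauss {b : ℝ} (hb : 0 < b) :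
    Integrable (fun v : V => rexp (-b * ‖v‖ ^ 2)) := by
  have h := GaussianFourier.integrable_cexp_neg_mul_sq_norm_add
    (show 0 < (b : ℂ).re from hb) 0 (0 : V)
  simp only [zero_mul, add_zero] at h
  have : (fun v : V => rexp (-b * ‖v‖ ^ 2)) =
      fun v : V => ‖Complex.exp (-(b:ℂ) * (‖v‖ : ℂ) ^ 2)‖ := by
    ext v
    rw [Complex.norm_exp]
    norm_cast
  rw [this]
  exact h.norm

lemma lintegral_gauss {b : ℝ} (hb : 0 < b) (w : V) :
    ∫⁻ v : V, ENNReal.ofReal (rexp (-b * ‖v - w‖ ^ 2)) =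
      ENNReal.ofReal ((π / b) ^ ((Module.finrank ℝ V : ℝ) / 2)) := by
  rw [← ofReal_integral_eq_lintegral_ofReal]
  · rw [integral_sub_right_eq_self (fun v : V => rexp (-b * ‖v‖ ^ 2)) w,
      GaussianFourier.integral_rexp_neg_mul_sq_norm hb]
  · exact ((integrable_gauss hb).comp_sub_right w)
  · exact Filter.Eventually.of_forall fun v => (exp_pos _).le

lemma convex_sq_norm_key {a b : ℝ} (ha : 0 < a) (hb : 0 < b) (x y z : V) :
    (a + b) * ‖y - ((a / (a + b)) • x + (b / (a + b)) • z)‖ ^ 2 ≤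
      a * ‖x - y‖ ^ 2 + b * ‖y - z‖ ^ 2 := by
  have hab : 0 < a + b := by linarith
  set p := a / (a + b) with hp
  set q := b / (a + b) with hq
  have hpq : p + q = 1 := by
    rw [hp, hq, ← add_div, div_self hab.ne']
  have hp0 : 0 ≤ p := by positivity
  have hq0 : 0 ≤ q := by positivity
  have hyd : y - (p • x + q • z) = p • (y - x) + q • (y - z) := by
    have : y = (p + q) • y := by rw [hpq, one_smul]
    rw [smul_sub, smul_sub]
    nth_rewrite 1 [this]
    module
  have h1 : ‖y - (p • x + q • z)‖ ≤ p * ‖y - x‖ + q * ‖y - z‖ := by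
    rw [hyd]
    refine (norm_add_le _ _).trans ?_
    rw [norm_smul, norm_smul, Real.norm_eq_abs, Real.norm_eq_abs,
      abs_of_nonneg hp0, abs_of_nonneg hq0]
  have h2 : ‖y - (p • x + q • z)‖ ^ 2 ≤ (p * ‖y - x‖ + q * ‖y - z‖) ^ 2 := by
    apply sq_le_sq' _ h1
    nlinarith [norm_nonneg (y - (p • x + q • z))]
  have h3 : (p * ‖y - x‖ + q * ‖y - z‖) ^ 2 ≤ p * ‖y - x‖ ^ 2 + q * ‖y - z‖ ^ 2 := by
    nlinarith [sq_nonneg (‖y - x‖ - ‖y - z‖), mul_nonneg hp0 hq0]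
  have hax : ‖x - y‖ = ‖y - x‖ := norm_sub_rev x y
  calc (a + b) * ‖y - (p • x + q • z)‖ ^ 2
      ≤ (a + b) * (p * ‖y - x‖ ^ 2 + q * ‖y - z‖ ^ 2) := by
        exact mul_le_mul_of_nonneg_left (h2.trans h3) hab.le
    _ = a * ‖x - y‖ ^ 2 + b * ‖y - z‖ ^ 2 := by
        rw [hax, hp, hq]; field_simp


noncomputable def heatKernel (n : ℕ) (x : EuclideanSpace ℝ (Fin n)) (t : ℝ) : ℝ :=
  if 0 < t then (4 * Real.pi * t) ^ (-(n : ℝ) / 2) * Real.exp (-‖x‖ ^ 2 / (4 * t)) else 0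

lemma heatKernel_nonneg (n : ℕ) (x : EuclideanSpace ℝ (Fin n)) (t : ℝ) :
    0 ≤ heatKernel n x t := by
  unfold heatKernel
  split
  · positivity
  · exact le_refl 0

lemma measurable_heatKernel (n : ℕ) :
    Measurable fun p : EuclideanSpace ℝ (Fin n) × ℝ => heatKernel n p.1 p.2 := by
  unfold heatKernel
  apply Measurable.ite (measurableSet_lt measurable_const measurable_snd)
  · fun_prop
  · exact measurable_const

lemma lintegral_Ioo_rpow {t p : ℝ} (ht : 0 < t) (hp : -1 < p) :
    ∫⁻ s in Ioo (0:ℝ) t, ENNReal.ofReal ((t - s) ^ p) =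
      ENNReal.ofReal (t ^ (p + 1) / (p + 1)) := by
  have hint : IntervalIntegrable (fun s => (t - s) ^ p) volume 0 t := by
    simpa using ((intervalIntegral.intervalIntegrable_rpow' hp (a := 0) (b := t)).comp_sub_left t).symm
  rw [← ofReal_integral_eq_lintegral_ofReal]
  · congr 1
    rw [← integral_Ioc_eq_integral_Ioo, ← intervalIntegral.integral_of_le ht.le,
      intervalIntegral.integral_comp_sub_left (fun u => u ^ p) t, sub_self, sub_zero,
      integral_rpow (Or.inl hp), Real.zero_rpow (by linarith), sub_zero]
  · exact (hint.1).mono_set Ioo_subset_Ioc_self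
  · exact (ae_restrict_iff' measurableSet_Ioo).2 (Filter.Eventually.of_forall fun s hs =>
      (Real.rpow_pos_of_pos (by linarith [hs.2]) p).le)

lemma heatKernel_pos_eq (n : ℕ) (v : EuclideanSpace ℝ (Fin n)) {τ : ℝ} (hτ : 0 < τ) :
    heatKernel n v τ = (4 * π * τ) ^ (-(n:ℝ) / 2) * rexp (-(1/(4*τ)) * ‖v‖ ^ 2) := by
  unfold heatKernel
  rw [if_pos hτ]
  ring_nf

lemma heatKernel_pow_eq (n : ℕ) (hn : 0 < n) {α : ℝ} (hα : 0 < α)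
    (v : EuclideanSpace ℝ (Fin n)) {τ : ℝ} (hτ : 0 < τ) :
    heatKernel n v τ ^ (α / n) =
      (4 * π * τ) ^ (-α / 2) * rexp (-(α/(4*(n:ℝ)*τ)) * ‖v‖ ^ 2) := by
  have h4 : (0:ℝ) < 4 * π * τ := by positivity
  have hn' : (0:ℝ) < (n:ℝ) := by exact_mod_cast hn
  rw [heatKernel_pos_eq n v hτ,
    Real.mul_rpow (Real.rpow_nonneg h4.le _) (exp_pos _).le,
    ← Real.rpow_mul h4.le, ← Real.exp_mul]
  congr 2
  · field_simp
  · field_simp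

section Core
variable {n : ℕ}

lemma lintegral_F (hn : 0 < n) {α : ℝ} (hα : 0 < α) (x : EuclideanSpace ℝ (Fin n))
    {τ : ℝ} (hτ : 0 < τ) :
    ∫⁻ y : EuclideanSpace ℝ (Fin n), ENNReal.ofReal (heatKernel n (x - y) τ ^ (α / n)) =
      ENNReal.ofReal ((4*π)^(-α/2) * (4*(n:ℝ)*π/α)^((n:ℝ)/2) * τ ^ (((n:ℝ) - α)/2)) := by
  have hn' : (0:ℝ) < (n:ℝ) := by exact_mod_cast hn
  have hb : 0 < α/(4*(n:ℝ)*τ) := by positivity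
  have h4 : (0:ℝ) < 4 * π * τ := by positivity
  calc ∫⁻ y : EuclideanSpace ℝ (Fin n), ENNReal.ofReal (heatKernel n (x - y) τ ^ (α / n))
      = ∫⁻ y : EuclideanSpace ℝ (Fin n), ENNReal.ofReal ((4 * π * τ) ^ (-α / 2)) *
          ENNReal.ofReal (rexp (-(α/(4*(n:ℝ)*τ)) * ‖y - x‖ ^ 2)) := by
        congr 1; ext y
        rw [heatKernel_pow_eq n hn hα _ hτ, ENNReal.ofReal_mul (by positivity),
          norm_sub_rev]
    _ = ENNReal.ofReal ((4 * π * τ) ^ (-α / 2)) *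
          ENNReal.ofReal ((π / (α/(4*(n:ℝ)*τ))) ^ ((n:ℝ)/2)) := by
        rw [lintegral_const_mul' _ _ ENNReal.ofReal_ne_top, lintegral_gauss hb x,
          finrank_euclideanSpace_fin]
    _ = ENNReal.ofReal ((4*π)^(-α/2) * (4*(n:ℝ)*π/α)^((n:ℝ)/2) * τ ^ (((n:ℝ) - α)/2)) := by
        rw [← ENNReal.ofReal_mul (by positivity)]
        congr 1
        have e1 : π / (α/(4*(n:ℝ)*τ)) = (4*(n:ℝ)*π/α) * τ := by field_simp
        have e2 : (4*π*τ : ℝ) = (4*π)*τ := by ring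
        rw [e1, e2, Real.mul_rpow (by positivity) hτ.le,
          Real.mul_rpow (by positivity) hτ.le]
        have e3 : τ^(-α/2) * τ^((n:ℝ)/2) = τ^(((n:ℝ)-α)/2) := by
          rw [← Real.rpow_add hτ]; ring_nf
        calc (4*π)^(-α/2) * τ^(-α/2) * ((4*(n:ℝ)*π/α)^((n:ℝ)/2) * τ^((n:ℝ)/2))
            = (4*π)^(-α/2) * (4*(n:ℝ)*π/α)^((n:ℝ)/2) * (τ^(-α/2) * τ^((n:ℝ)/2)) := by ring
          _ = (4*π)^(-α/2) * (4*(n:ℝ)*π/α)^((n:ℝ)/2) * τ^(((n:ℝ)-α)/2) := by rw [e3]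

lemma lintegral_FB (hn : 0 < n) {α : ℝ} (hα : 0 < α)
    (x z : EuclideanSpace ℝ (Fin n)) {s t : ℝ} (hs : 0 < s) (hst : s < t) :
    ∫⁻ y : EuclideanSpace ℝ (Fin n),
        ENNReal.ofReal (heatKernel n (x - y) (t - s) ^ (α / n) * heatKernel n (y - z) s) ≤
      ENNReal.ofReal ((4*π)^(-α/2) * ((n:ℝ)/min α n)^((n:ℝ)/2) *
        (t - s)^(((n:ℝ) - α)/2) * t^(-(n:ℝ)/2)) := by
  have hn' : (0:ℝ) < (n:ℝ) := by exact_mod_cast hn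
  set τ := t - s with hτdef
  have hτ : 0 < τ := by simp [hτdef]; linarith
  have ht : 0 < t := hs.trans hst
  set a := α/(4*(n:ℝ)*τ) with hadef
  set b := (1:ℝ)/(4*s) with hbdef
  have ha : 0 < a := by positivity
  have hb : 0 < b := by positivity
  have hab : 0 < a + b := by linarith
  set w := (a / (a + b)) • x + (b / (a + b)) • z with hwdef
  set m := min α n with hmdef
  have hm : 0 < m := lt_min hα hn'
  have hmα : m ≤ α := min_le_left _ _
  have hmn : m ≤ (n:ℝ) := min_le_right _ _
  set pre := (4*π*τ)^(-α/2) * (4*π*s)^(-(n:ℝ)/2) with hpre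
  have hpre0 : 0 ≤ pre := by positivity
  -- pointwise bound
  have hpoint : ∀ y : EuclideanSpace ℝ (Fin n),
      heatKernel n (x - y) τ ^ (α / n) * heatKernel n (y - z) s ≤
        pre * rexp (-(a + b) * ‖y - w‖ ^ 2) := by
    intro y
    rw [heatKernel_pow_eq n hn hα _ hτ, heatKernel_pos_eq n _ hs]
    have hkey := convex_sq_norm_key ha hb x y z
    calc (4*π*τ)^(-α/2) * rexp (-a * ‖x - y‖^2) *
          ((4*π*s)^(-(n:ℝ)/2) * rexp (-b * ‖y - z‖^2))
        = pre * rexp (-a * ‖x - y‖^2 + -b * ‖y - z‖^2) := by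
          rw [Real.exp_add, hpre]; ring
      _ ≤ pre * rexp (-(a + b) * ‖y - w‖ ^ 2) := by
          apply mul_le_mul_of_nonneg_left _ hpre0
          apply Real.exp_le_exp.2
          nlinarith [hkey]
  calc ∫⁻ y : EuclideanSpace ℝ (Fin n),
        ENNReal.ofReal (heatKernel n (x - y) τ ^ (α / n) * heatKernel n (y - z) s)
      ≤ ∫⁻ y : EuclideanSpace ℝ (Fin n),
          ENNReal.ofReal pre * ENNReal.ofReal (rexp (-(a + b) * ‖y - w‖ ^ 2)) := by
        apply lintegral_mono; intro y
        dsimp only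
        rw [← ENNReal.ofReal_mul hpre0]
        exact ENNReal.ofReal_le_ofReal (hpoint y)
    _ = ENNReal.ofReal pre * ENNReal.ofReal ((π/(a+b))^((n:ℝ)/2)) := by
        rw [lintegral_const_mul' _ _ ENNReal.ofReal_ne_top, lintegral_gauss hab w,
          finrank_euclideanSpace_fin]
    _ ≤ ENNReal.ofReal ((4*π)^(-α/2) * ((n:ℝ)/m)^((n:ℝ)/2) * τ^(((n:ℝ) - α)/2) * t^(-(n:ℝ)/2)) := by
        rw [← ENNReal.ofReal_mul hpre0]
        apply ENNReal.ofReal_le_ofReal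
        have habs : a + b = (α*s + n*τ)/(4*(n:ℝ)*τ*s) := by
          rw [hadef, hbdef]; field_simp
        have hden : 0 < α*s + (n:ℝ)*τ := by positivity
        have hmt : m * t ≤ α*s + (n:ℝ)*τ := by
          have h1 : m * s ≤ α * s := by nlinarith
          have h2 : m * τ ≤ (n:ℝ) * τ := by nlinarith
          nlinarith
        have e3 : ((4*π*s : ℝ))^(-(n:ℝ)/2) = ((4*π*s : ℝ)⁻¹)^((n:ℝ)/2) := by
          rw [Real.inv_rpow (by positivity), ← Real.rpow_neg (by positivity)]
          ring_nf
        have e4 : ((4*π*s : ℝ)⁻¹)^((n:ℝ)/2) * (π/(a+b))^((n:ℝ)/2) =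
            ((n:ℝ)*τ/(α*s+(n:ℝ)*τ))^((n:ℝ)/2) := by
          rw [← Real.mul_rpow (by positivity) (by positivity)]
          congr 1
          rw [habs]
          field_simp
        have e1 : pre * (π/(a+b))^((n:ℝ)/2) =
            (4*π)^(-α/2) * τ^(-α/2) * ((n:ℝ)*τ/(α*s+(n:ℝ)*τ))^((n:ℝ)/2) := by
          rw [hpre, show (4*π*τ : ℝ) = (4*π)*τ from by ring,
            Real.mul_rpow (by positivity) hτ.le, e3]
          calc (4*π)^(-α/2) * τ^(-α/2) * ((4*π*s : ℝ)⁻¹)^((n:ℝ)/2) * (π/(a+b))^((n:ℝ)/2)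
              = (4*π)^(-α/2) * τ^(-α/2) *
                  (((4*π*s : ℝ)⁻¹)^((n:ℝ)/2) * (π/(a+b))^((n:ℝ)/2)) := by ring
            _ = (4*π)^(-α/2) * τ^(-α/2) * ((n:ℝ)*τ/(α*s+(n:ℝ)*τ))^((n:ℝ)/2) := by rw [e4]
        have e5 : ((n:ℝ)*τ/(m*t))^((n:ℝ)/2) =
            ((n:ℝ)/m)^((n:ℝ)/2) * τ^((n:ℝ)/2) * (t^(-(n:ℝ)/2)) := by
          rw [show ((n:ℝ)*τ/(m*t)) = ((n:ℝ)/m) * τ * t⁻¹ from by field_simp,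
            Real.mul_rpow (by positivity) (by positivity),
            Real.mul_rpow (by positivity) hτ.le,
            Real.inv_rpow ht.le, ← Real.rpow_neg ht.le]
          ring_nf
        have e6 : τ^(-α/2) * τ^((n:ℝ)/2) = τ^(((n:ℝ)-α)/2) := by
          rw [← Real.rpow_add hτ]; ring_nf
        calc pre * (π/(a+b))^((n:ℝ)/2)
            = (4*π)^(-α/2) * τ^(-α/2) * ((n:ℝ)*τ/(α*s+(n:ℝ)*τ))^((n:ℝ)/2) := e1
          _ ≤ (4*π)^(-α/2) * τ^(-α/2) * ((n:ℝ)*τ/(m*t))^((n:ℝ)/2) := by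
              apply mul_le_mul_of_nonneg_left _ (by positivity)
              apply Real.rpow_le_rpow (by positivity) _ (by positivity)
              exact div_le_div_of_nonneg_left (by positivity) (by positivity) hmt
          _ = (4*π)^(-α/2) * ((n:ℝ)/m)^((n:ℝ)/2) * τ^(((n:ℝ) - α)/2) * t^(-(n:ℝ)/2) := by
              rw [e5, ← e6]; ring

end Core

theorem heatKernel_pow_measure_potential (n : ℕ) (hn : 1 ≤ n) (α l : ℝ)
    (hα : α ∈ Set.Ioo 0 ((n : ℝ) + 2)) (hl : l ∈ Set.Ioo (0 : ℝ) 1)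
    (μ : Measure (EuclideanSpace ℝ (Fin n))) [IsFiniteMeasure μ]
    (c : EuclideanSpace ℝ (Fin n)) (R : ℝ) (hR : 0 < R)
    (hsupp : μ (Metric.ball c R)ᶜ = 0) :
    ∃ C > 0, ∀ (x : EuclideanSpace ℝ (Fin n)) (t : ℝ), 0 < t →
      (∫ s in Set.Ioo (0 : ℝ) t, ∫ y : EuclideanSpace ℝ (Fin n),
          heatKernel n (x - y) (t - s) ^ (α / (n : ℝ)) *
            (∫ z in Metric.ball c R, heatKernel n (y - z) s ∂μ) ^ l) ≤
        C * Real.sqrt t ^ ((n : ℝ) + 2 - α - l * n) := by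
  obtain ⟨hα0, hα2⟩ := hα
  obtain ⟨hl0, hl1⟩ := hl
  have hn0 : 0 < n := hn
  have hn' : (0:ℝ) < (n:ℝ) := by exact_mod_cast hn0
  set q : ℝ := (((n:ℝ) - α)/2) + 1 with hqdef
  have hq0 : 0 < q := by rw [hqdef]; linarith
  set K₁ : ℝ := (4*π)^(-α/2) * (4*(n:ℝ)*π/α)^((n:ℝ)/2) with hK₁def
  have hK₁ : 0 < K₁ := by positivity
  set m : ℝ := min α (n:ℝ) with hmdef
  have hm : 0 < m := lt_min hα0 hn'
  set K₂ : ℝ := (4*π)^(-α/2) * ((n:ℝ)/m)^((n:ℝ)/2) with hK₂def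
  have hK₂ : 0 < K₂ := by positivity
  set M : ℝ := (μ Set.univ).toReal with hMdef
  have hM : 0 ≤ M := ENNReal.toReal_nonneg
  set A : ℝ := K₁ / q with hAdef
  have hA : 0 < A := by positivity
  set B : ℝ := K₂ * M / q with hBdef
  have hB : 0 ≤ B := by positivity
  refine ⟨A ^ (1 - l) * B ^ l + 1, by positivity, fun x t ht => ?_⟩
  set e : ℝ := (n:ℝ) + 2 - α - l * n with hedef
  have hsq : ∀ e' : ℝ, Real.sqrt t ^ e' = t ^ (e'/2) := by
    intro e'
    rw [Real.sqrt_eq_rpow, ← Real.rpow_mul ht.le, show (1/2) * e' = e'/2 from by ring]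
  -- the ENNReal-valued functions
  set F : ℝ → EuclideanSpace ℝ (Fin n) → ℝ≥0∞ := fun s y =>
    ENNReal.ofReal (heatKernel n (x - y) (t - s) ^ (α / (n:ℝ))) with hFdef
  set G : ℝ → EuclideanSpace ℝ (Fin n) → ℝ≥0∞ := fun s y =>
    ∫⁻ z, ENNReal.ofReal (heatKernel n (y - z) s) ∂(μ.restrict (Metric.ball c R)) with hGdef
  have hkm := measurable_heatKernel n
  have hFm : Measurable fun p : ℝ × EuclideanSpace ℝ (Fin n) => F p.1 p.2 := by
    have h1 : Measurable fun p : ℝ × EuclideanSpace ℝ (Fin n) =>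
        heatKernel n (x - p.2) (t - p.1) :=
      hkm.comp ((measurable_const.sub measurable_snd).prodMk
        (measurable_const.sub measurable_fst))
    fun_prop
  have hGm : Measurable fun p : ℝ × EuclideanSpace ℝ (Fin n) => G p.1 p.2 := by
    have h1 : Measurable (Function.uncurry
        fun (p : ℝ × EuclideanSpace ℝ (Fin n)) (z : EuclideanSpace ℝ (Fin n)) =>
          ENNReal.ofReal (heatKernel n (p.2 - z) p.1)) := by
      apply Measurable.ennreal_ofReal
      exact hkm.comp (((measurable_snd.comp measurable_fst).sub measurable_snd).prodMk
        (measurable_fst.comp measurable_fst))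
    exact h1.lintegral_prod_right
  set p0 : ℝ := ((n:ℝ) - α)/2 with hp0def
  have hp0 : -1 < p0 := by rw [hp0def]; linarith
  have hq_p0 : p0 + 1 = q := rfl
  -- nonnegativity facts
  have hgnn : ∀ (s : ℝ) (y : EuclideanSpace ℝ (Fin n)),
      0 ≤ ∫ z in Metric.ball c R, heatKernel n (y - z) s ∂μ :=
    fun s y => integral_nonneg fun z => heatKernel_nonneg n _ _
  have hinn : ∀ (s : ℝ) (y : EuclideanSpace ℝ (Fin n)),
      0 ≤ heatKernel n (x - y) (t - s) ^ (α / (n:ℝ)) *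
        (∫ z in Metric.ball c R, heatKernel n (y - z) s ∂μ) ^ l := fun s y =>
    mul_nonneg (Real.rpow_nonneg (heatKernel_nonneg n _ _) _)
      (Real.rpow_nonneg (hgnn s y) _)
  set I : ℝ≥0∞ := ∫⁻ s in Ioo (0:ℝ) t, ∫⁻ y, F s y * (G s y) ^ l with hIdef
  -- Step 1 : real iterated integral ≤ the ENNReal quantity
  have hJI : (∫⁻ s in Ioo (0:ℝ) t, ENNReal.ofReal (∫ y : EuclideanSpace ℝ (Fin n),
      heatKernel n (x - y) (t - s) ^ (α / (n:ℝ)) *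
        (∫ z in Metric.ball c R, heatKernel n (y - z) s ∂μ) ^ l)) ≤ I := by
    apply lintegral_mono
    intro s
    have ha := integral_le_toReal_lintegral volume
      (fun y : EuclideanSpace ℝ (Fin n) => heatKernel n (x - y) (t - s) ^ (α / (n:ℝ)) *
        (∫ z in Metric.ball c R, heatKernel n (y - z) s ∂μ) ^ l) (hinn s)
    refine (ENNReal.ofReal_le_ofReal ha).trans (ENNReal.ofReal_toReal_le.trans ?_)
    apply lintegral_mono
    intro y
    dsimp only
    rw [ENNReal.ofReal_mul (Real.rpow_nonneg (heatKernel_nonneg n _ _) _),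
      ← ENNReal.ofReal_rpow_of_nonneg (hgnn s y) hl0.le]
    refine mul_le_mul' le_rfl (ENNReal.rpow_le_rpow ?_ hl0.le)
    have hb := integral_le_toReal_lintegral (μ.restrict (Metric.ball c R))
      (fun z => heatKernel n (y - z) s) (fun z => heatKernel_nonneg n _ _)
    exact (ENNReal.ofReal_le_ofReal hb).trans ENNReal.ofReal_toReal_le
  -- Bound X
  have hX : (∫⁻ s in Ioo (0:ℝ) t, ∫⁻ y, F s y) = ENNReal.ofReal (A * t ^ q) := by
    have hcong : ∀ s ∈ Ioo (0:ℝ) t, (∫⁻ y, F s y) = ENNReal.ofReal (K₁ * (t - s) ^ p0) := by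
      intro s hs
      have hτ : 0 < t - s := by linarith [hs.2]
      rw [hFdef]
      rw [lintegral_F hn0 hα0 x hτ, hK₁def, hp0def]
    rw [setLIntegral_congr_fun measurableSet_Ioo hcong]
    have : ∀ s : ℝ, ENNReal.ofReal (K₁ * (t - s) ^ p0) =
        ENNReal.ofReal K₁ * ENNReal.ofReal ((t - s) ^ p0) := fun s =>
      ENNReal.ofReal_mul hK₁.le
    simp only [this]
    rw [lintegral_const_mul' _ _ ENNReal.ofReal_ne_top, lintegral_Ioo_rpow ht hp0,
      ← ENNReal.ofReal_mul hK₁.le, hq_p0]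
    congr 1
    rw [hAdef]
    ring
  -- Bound Y
  have hY : (∫⁻ s in Ioo (0:ℝ) t, ∫⁻ y, F s y * G s y) ≤
      ENNReal.ofReal (B * t ^ ((2 - α)/2)) := by
    have hYs : ∀ s ∈ Ioo (0:ℝ) t, (∫⁻ y, F s y * G s y) ≤
        ENNReal.ofReal (K₂ * M * t ^ (-(n:ℝ)/2) * (t - s) ^ p0) := by
      intro s hs
      have hτ : 0 < t - s := by linarith [hs.2]
      have hswap : (∫⁻ y, F s y * G s y) = ∫⁻ z in Metric.ball c R,
          ∫⁻ y, F s y * ENNReal.ofReal (heatKernel n (y - z) s) ∂volume ∂μ := by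
        rw [hGdef]
        simp only
        have h1 : ∀ y : EuclideanSpace ℝ (Fin n), F s y *
            (∫⁻ z in Metric.ball c R, ENNReal.ofReal (heatKernel n (y - z) s) ∂μ) =
            ∫⁻ z in Metric.ball c R, F s y * ENNReal.ofReal (heatKernel n (y - z) s) ∂μ :=
          fun y => (lintegral_const_mul' _ _ ENNReal.ofReal_ne_top).symm
        simp only [h1]
        apply lintegral_lintegral_swap
        show AEMeasurable ((fun p : EuclideanSpace ℝ (Fin n) × EuclideanSpace ℝ (Fin n) => F s p.1) *
          fun p => ENNReal.ofReal (heatKernel n (p.1 - p.2) s)) _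
        apply AEMeasurable.mul
        · have hFsm : Measurable (F s) := hFm.comp measurable_prodMk_left
          exact (hFsm.comp measurable_fst).aemeasurable
        · apply Measurable.aemeasurable
          apply Measurable.ennreal_ofReal
          exact hkm.comp ((measurable_fst.sub measurable_snd).prodMk measurable_const)
      rw [hswap]
      calc ∫⁻ z in Metric.ball c R,
            ∫⁻ y, F s y * ENNReal.ofReal (heatKernel n (y - z) s) ∂volume ∂μ
          ≤ ∫⁻ _z in Metric.ball c R,
              ENNReal.ofReal (K₂ * (t - s) ^ p0 * t ^ (-(n:ℝ)/2)) ∂μ := by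
            apply lintegral_mono
            intro z
            have heq : ∀ y : EuclideanSpace ℝ (Fin n),
                F s y * ENNReal.ofReal (heatKernel n (y - z) s) =
                ENNReal.ofReal (heatKernel n (x - y) (t - s) ^ (α / (n:ℝ)) *
                  heatKernel n (y - z) s) := fun y =>
              (ENNReal.ofReal_mul (Real.rpow_nonneg (heatKernel_nonneg n _ _) _)).symm
            simp only [heq]
            have := lintegral_FB hn0 hα0 x z hs.1 hs.2
            rw [hK₂def, hp0def]
            calc (∫⁻ y, ENNReal.ofReal (heatKernel n (x - y) (t - s) ^ (α / (n:ℝ)) *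
                  heatKernel n (y - z) s))
                ≤ ENNReal.ofReal ((4*π)^(-α/2) * ((n:ℝ)/min α (n:ℝ))^((n:ℝ)/2) *
                    (t - s)^(((n:ℝ) - α)/2) * t^(-(n:ℝ)/2)) := this
              _ = ENNReal.ofReal ((4*π)^(-α/2) * ((n:ℝ)/min α (n:ℝ))^((n:ℝ)/2) *
                    ((t - s)^(((n:ℝ) - α)/2) * t^(-(n:ℝ)/2))) := by rw [mul_assoc]
              _ = _ := by rw [← mul_assoc]
        _ = ENNReal.ofReal (K₂ * (t - s) ^ p0 * t ^ (-(n:ℝ)/2)) * μ (Metric.ball c R) := by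
            rw [lintegral_const, Measure.restrict_apply_univ]
        _ ≤ ENNReal.ofReal (K₂ * (t - s) ^ p0 * t ^ (-(n:ℝ)/2)) * ENNReal.ofReal M := by
            apply mul_le_mul' le_rfl
            rw [hMdef, ENNReal.ofReal_toReal (measure_ne_top μ _)]
            exact measure_mono (subset_univ _)
        _ = ENNReal.ofReal (K₂ * M * t ^ (-(n:ℝ)/2) * (t - s) ^ p0) := by
            rw [← ENNReal.ofReal_mul (by positivity)]
            congr 1
            ring
    calc (∫⁻ s in Ioo (0:ℝ) t, ∫⁻ y, F s y * G s y)
        ≤ ∫⁻ s in Ioo (0:ℝ) t,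
            ENNReal.ofReal (K₂ * M * t ^ (-(n:ℝ)/2) * (t - s) ^ p0) :=
          setLIntegral_mono' measurableSet_Ioo hYs
      _ = ENNReal.ofReal (K₂ * M * t ^ (-(n:ℝ)/2)) * ENNReal.ofReal (t ^ q / q) := by
          have : ∀ s : ℝ, ENNReal.ofReal (K₂ * M * t ^ (-(n:ℝ)/2) * (t - s) ^ p0) =
              ENNReal.ofReal (K₂ * M * t ^ (-(n:ℝ)/2)) * ENNReal.ofReal ((t - s) ^ p0) :=
            fun s => ENNReal.ofReal_mul (by positivity)
          simp only [this]
          rw [lintegral_const_mul' _ _ ENNReal.ofReal_ne_top, lintegral_Ioo_rpow ht hp0, hq_p0]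
      _ ≤ ENNReal.ofReal (B * t ^ ((2 - α)/2)) := by
          rw [← ENNReal.ofReal_mul (by positivity)]
          apply ENNReal.ofReal_le_ofReal
          apply le_of_eq
          have ht2 : t ^ (-(n:ℝ)/2) * t ^ q = t ^ ((2 - α)/2) := by
            rw [← Real.rpow_add ht, hqdef, hp0def]
            congr 1
            ring
          calc K₂ * M * t ^ (-(n:ℝ)/2) * (t ^ q / q)
              = K₂ * M / q * (t ^ (-(n:ℝ)/2) * t ^ q) := by ring
            _ = B * t ^ ((2 - α)/2) := by rw [ht2, hBdef]
  -- Hölder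
  have hFGm : Measurable fun pr : ℝ × EuclideanSpace ℝ (Fin n) =>
      F pr.1 pr.2 * (G pr.1 pr.2) ^ l := by fun_prop
  have hIle : I ≤ ENNReal.ofReal ((A * t ^ q) ^ (1 - l) * (B * t ^ ((2 - α)/2)) ^ l) := by
    set ρ : Measure (ℝ × EuclideanSpace ℝ (Fin n)) :=
      (volume.restrict (Ioo (0:ℝ) t)).prod volume with hρdef
    have hIprod : I = ∫⁻ pr, F pr.1 pr.2 * (G pr.1 pr.2) ^ l ∂ρ :=
      (lintegral_prod _ hFGm.aemeasurable).symm
    have hXprod : (∫⁻ pr, F pr.1 pr.2 ∂ρ) = ∫⁻ s in Ioo (0:ℝ) t, ∫⁻ y, F s y :=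
      lintegral_prod _ hFm.aemeasurable
    have hYprod : (∫⁻ pr, F pr.1 pr.2 * G pr.1 pr.2 ∂ρ) =
        ∫⁻ s in Ioo (0:ℝ) t, ∫⁻ y, F s y * G s y :=
      lintegral_prod _ (hFm.mul hGm).aemeasurable
    have h1l : (0:ℝ) < 1 - l := by linarith
    have hpq : Real.HolderConjugate (1 - l)⁻¹ l⁻¹ := by
      exact Real.HolderConjugate.inv_inv h1l hl0 (by ring)
    have hf : Measurable fun pr : ℝ × EuclideanSpace ℝ (Fin n) =>
        (F pr.1 pr.2) ^ (1 - l) := by fun_prop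
    have hg : Measurable fun pr : ℝ × EuclideanSpace ℝ (Fin n) =>
        (F pr.1 pr.2 * G pr.1 pr.2) ^ l := by fun_prop
    have holder := ENNReal.lintegral_mul_le_Lp_mul_Lq ρ hpq hf.aemeasurable hg.aemeasurable
    have hfg : ∀ pr : ℝ × EuclideanSpace ℝ (Fin n),
        (F pr.1 pr.2) ^ (1 - l) * (F pr.1 pr.2 * G pr.1 pr.2) ^ l =
          F pr.1 pr.2 * (G pr.1 pr.2) ^ l := by
      intro pr
      rw [ENNReal.mul_rpow_of_nonneg _ _ hl0.le, ← mul_assoc,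
        ← ENNReal.rpow_add_of_nonneg _ _ h1l.le hl0.le, sub_add_cancel, ENNReal.rpow_one]
    have hfp : ∀ pr : ℝ × EuclideanSpace ℝ (Fin n),
        ((F pr.1 pr.2) ^ (1 - l)) ^ (1 - l)⁻¹ = F pr.1 pr.2 := by
      intro pr
      rw [← ENNReal.rpow_mul, mul_inv_cancel₀ h1l.ne', ENNReal.rpow_one]
    have hgq : ∀ pr : ℝ × EuclideanSpace ℝ (Fin n),
        ((F pr.1 pr.2 * G pr.1 pr.2) ^ l) ^ l⁻¹ = F pr.1 pr.2 * G pr.1 pr.2 := by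
      intro pr
      rw [← ENNReal.rpow_mul, mul_inv_cancel₀ hl0.ne', ENNReal.rpow_one]
    simp only [Pi.mul_apply, hfg, hfp, hgq, one_div, inv_inv] at holder
    rw [hIprod]
    calc (∫⁻ pr, F pr.1 pr.2 * (G pr.1 pr.2) ^ l ∂ρ)
        ≤ (∫⁻ pr, F pr.1 pr.2 ∂ρ) ^ (1 - l) * (∫⁻ pr, F pr.1 pr.2 * G pr.1 pr.2 ∂ρ) ^ l :=
          holder
      _ ≤ (ENNReal.ofReal (A * t ^ q)) ^ (1 - l) *
            (ENNReal.ofReal (B * t ^ ((2 - α)/2))) ^ l := by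
          apply mul_le_mul'
          · apply ENNReal.rpow_le_rpow _ h1l.le
            rw [hXprod, hX]
          · apply ENNReal.rpow_le_rpow _ hl0.le
            rw [hYprod]
            exact hY
      _ = ENNReal.ofReal ((A * t ^ q) ^ (1 - l) * (B * t ^ ((2 - α)/2)) ^ l) := by
          rw [ENNReal.ofReal_rpow_of_nonneg (by positivity) h1l.le,
            ENNReal.ofReal_rpow_of_nonneg (by positivity) hl0.le,
            ← ENNReal.ofReal_mul (by positivity)]
  -- final real computation
  have hD : (A * t ^ q) ^ (1 - l) * (B * t ^ ((2 - α)/2)) ^ l =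
      A ^ (1 - l) * B ^ l * Real.sqrt t ^ e := by
    rw [Real.mul_rpow hA.le (Real.rpow_nonneg ht.le _),
      Real.mul_rpow hB (Real.rpow_nonneg ht.le _),
      ← Real.rpow_mul ht.le, ← Real.rpow_mul ht.le, hsq e]
    calc A ^ (1 - l) * t ^ (q * (1 - l)) * (B ^ l * t ^ ((2 - α)/2 * l))
        = A ^ (1 - l) * B ^ l * (t ^ (q * (1 - l)) * t ^ ((2 - α)/2 * l)) := by ring
      _ = A ^ (1 - l) * B ^ l * t ^ (e / 2) := by
          rw [← Real.rpow_add ht]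
          congr 1
          rw [hqdef, hp0def, hedef]
          ring
  rw [hD] at hIle
  have hsqe : 0 ≤ Real.sqrt t ^ e := Real.rpow_nonneg (Real.sqrt_nonneg t) _
  calc (∫ s in Ioo (0:ℝ) t, ∫ y : EuclideanSpace ℝ (Fin n),
        heatKernel n (x - y) (t - s) ^ (α / (n:ℝ)) *
          (∫ z in Metric.ball c R, heatKernel n (y - z) s ∂μ) ^ l)
      ≤ (∫⁻ s in Ioo (0:ℝ) t, ENNReal.ofReal (∫ y : EuclideanSpace ℝ (Fin n),
          heatKernel n (x - y) (t - s) ^ (α / (n:ℝ)) *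
            (∫ z in Metric.ball c R, heatKernel n (y - z) s ∂μ) ^ l)).toReal :=
        integral_le_toReal_lintegral _ _ (fun s => integral_nonneg (hinn s))
    _ ≤ A ^ (1 - l) * B ^ l * Real.sqrt t ^ e :=
        ENNReal.toReal_le_of_le_ofReal (by positivity) (hJI.trans hIle)
    _ ≤ (A ^ (1 - l) * B ^ l + 1) * Real.sqrt t ^ e := by
        apply mul_le_mul_of_nonneg_right _ hsqe
        exact le_add_of_nonneg_right zero_le_one
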